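/- Let G₁ : D ⥤ E and G₀ : E ⥤ C be functors with left adjoints F₁ and F₀ respectively, let G = G₀ ∘ G₁ with left adjoint F = F₁ ∘ F₀, and let T = G∘F be the induced monad on C. Suppose that G₀ is monadic and that the natural transformation G₀∘F₀ → G₀∘G₁∘F₁∘F₀ = T, obtained by whiskering the unit of the adjunction F₁ ⊣ G₁ with G₀ on the left and F₀ on the right, is an isomorphism. Then there is an equivalence of categories between E and the Eilenberg–Moore category Alg(T) of T-algebras, under which G₀ corresponds (up to natural isomorphism) to the forgetful functor Alg(T) ⥤ C and G₁ corresponds to the comparison functor D ⥤ Alg(T) of the adjunction F ⊣ G. -/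

import Mathlib

/-!
STATEMENT 1 (1-categorical `Char_Mnd`):
Given adjunctions `F₀ ⊣ G₀` (between `C` and `E`) and `F₁ ⊣ G₁` (between `E` and `D`),
with composite adjunction `F = F₀ ⋙ F₁ ⊣ G = G₁ ⋙ G₀` and induced monad `T = G ∘ F` on `C`,
if `G₀` is monadic and the natural map of monads `G₀ ∘ F₀ → G₀ ∘ G₁ ∘ F₁ ∘ F₀ = T`
(obtained by whiskering the unit of `F₁ ⊣ G₁` by `G₀` on the left and `F₀` on the right)
is an isomorphism, then there is an equivalence `E ≌ Alg(T)` under which `G₀`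
corresponds to the forgetful functor and `G₁` corresponds to the comparison functor of `F ⊣ G`.
-/

open CategoryTheory

universe v u₁ u₂ u₃

theorem char_mnd {C : Type u₁} {E : Type u₂} {D : Type u₃}
    [Category.{v} C] [Category.{v} E] [Category.{v} D]
    {F₀ : C ⥤ E} {G₀ : E ⥤ C} (adj₀ : F₀ ⊣ G₀)
    {F₁ : E ⥤ D} {G₁ : D ⥤ E} (adj₁ : F₁ ⊣ G₁)
    (hmonadic : (Monad.comparison adj₀).IsEquivalence)
    (hunit : ∀ X : C, IsIso (G₀.map (adj₁.unit.app (F₀.obj X)))) :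
    ∃ e : E ≌ (adj₀.comp adj₁).toMonad.Algebra,
      Nonempty (e.functor ⋙ (adj₀.comp adj₁).toMonad.forget ≅ G₀) ∧
      Nonempty (G₁ ⋙ e.functor ≅ Monad.comparison (adj₀.comp adj₁)) := by
  have : ∀ X : C, IsIso (G₀.map (adj₁.unit.app (F₀.obj X))) := hunit
  let f : (adj₀.toMonad : C ⥤ C) ≅ ((adj₀.comp adj₁).toMonad : C ⥤ C) :=
    NatIso.ofComponents (fun X => @asIso _ _ _ _ (G₀.map (adj₁.unit.app (F₀.obj X))) (hunit X))
      (fun {X Y} g => by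
        dsimp [Adjunction.toMonad]
        simp only [Functor.comp_map, ← G₀.map_comp]
        congr 1
        exact adj₁.unit.naturality _)
  have f_η : ∀ X : C, adj₀.toMonad.η.app X ≫ f.hom.app X = (adj₀.comp adj₁).toMonad.η.app X := by
    intro X; simp [f, Adjunction.toMonad]
  have f_μ : ∀ X : C, adj₀.toMonad.μ.app X ≫ f.hom.app X =
      (adj₀.toMonad.map (f.hom.app X) ≫ f.hom.app ((adj₀.comp adj₁).toMonad.obj X)) ≫
        (adj₀.comp adj₁).toMonad.μ.app X := by
    intro X
    change G₀.map (adj₀.counit.app (F₀.obj X)) ≫ G₀.map (adj₁.unit.app (F₀.obj X)) =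
      (G₀.map (F₀.map (G₀.map (adj₁.unit.app (F₀.obj X)))) ≫ G₀.map (adj₁.unit.app (F₀.obj (G₀.obj (G₁.obj (F₁.obj (F₀.obj X))))))) ≫
        G₀.map (G₁.map ((adj₀.comp adj₁).counit.app (F₁.obj (F₀.obj X))))
    simp only [← G₀.map_comp, ← Functor.map_comp_assoc]
    congr 1
    simp only [Adjunction.comp_counit_app, Functor.map_comp]
    rw [Category.assoc]; erw [← adj₁.unit_naturality_assoc]
    simp only [← Functor.map_comp, ← Functor.map_comp_assoc]
    rw [adj₀.counit_naturality]
    simp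
  let φ : adj₀.toMonad ≅ (adj₀.comp adj₁).toMonad := MonadIso.mk f f_η f_μ
  let e : E ≌ (adj₀.comp adj₁).toMonad.Algebra :=
    ((Monad.comparison adj₀).asEquivalence).trans (Monad.algebraEquivOfIsoMonads φ)
  refine ⟨e, ⟨NatIso.ofComponents (fun X => Iso.refl _) ?_⟩,
    ⟨NatIso.ofComponents (fun Y => Monad.Algebra.isoMk (Iso.refl _) ?_) ?_⟩⟩
  · intro X Y g; simp [e, Monad.forget]; erw [Category.comp_id, Category.id_comp]; rfl
  · simp only [Iso.refl_hom, Functor.map_id, Category.id_comp, Category.comp_id]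
    change G₀.map (G₁.map (F₁.map (F₀.map (𝟙 (G₀.obj (G₁.obj Y)))))) ≫ G₀.map (G₁.map ((adj₀.comp adj₁).counit.app Y)) =
      (inv (G₀.map (adj₁.unit.app (F₀.obj (G₀.obj (G₁.obj Y))))) ≫ G₀.map (adj₀.counit.app (G₁.obj Y))) ≫ 𝟙 (G₀.obj (G₁.obj Y))
    rw [eq_comm]
    erw [Category.comp_id, F₀.map_id, F₁.map_id, G₁.map_id, G₀.map_id, Category.id_comp]
    rw [IsIso.inv_comp_eq]
    simp only [Functor.map_id, Category.id_comp, Adjunction.comp_counit_app, Functor.map_comp,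
      Category.assoc]
    simp only [← G₀.map_comp]
    congr 1
    erw [adj₁.unit_naturality_assoc]
    simp
  · intro X Y g; ext; simp [e]; erw [Category.comp_id, Category.id_comp]; rfl
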